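/- Consider the cdga inclusion φ: (Λ(a), 0) → (Λ(a,b,x), d) with |a| = |b| = 2, |x| = 3, d(x) = a² + b². Define the ℚ-linear map r: Λ(a,b,x) → Λ(a) by r(bⁱx·a^j) = 0 for all i,j ≥ 0, r(bⁱa^j) = 0 for i odd, and r(bⁱa^j) = (-1)^{i/2} a^{i+j} for i even. Then r is a chain map, is Λ(a)-linear (r(a·ξ) = a·r(ξ)), and satisfies r∘φ = id. In particular φ admits a retraction of (Λ(a),0)-modules. -/

import Mathlib

/-- For the cdga inclusion φ : (Λ(a),0) → (Λ(a,b,x),d) with |a| = |b| = 2, |x| = 3,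
d(x) = a² + b², the ℚ-linear map r defined on the basis by r(aʲbⁱx) = 0,
r(aʲbⁱ) = 0 for i odd, and r(aʲb^{2k}) = (-1)ᵏ a^{2k+j}, is a chain map, is
Λ(a)-linear, and satisfies r ∘ φ = id.  In particular φ admits a retraction of
(Λ(a),0)-modules. -/
theorem module_retraction_Stanley_example
    -- B = (Λ(a₀), 0)
    (B : Type) [Ring B] [Algebra ℚ B]
    (a₀ : B)
    (basB : Module.Basis ℕ ℚ B) (hbasB : ∀ k : ℕ, basB k = a₀ ^ k)
    -- A = (Λ(a,b,x), d)
    (A : Type) [Ring A] [Algebra ℚ A]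
    (𝒜 : ℕ → Submodule ℚ A)
    (honeA : (1 : A) ∈ 𝒜 0)
    (hgmulA : ∀ (i j : ℕ) (u v : A), u ∈ 𝒜 i → v ∈ 𝒜 j → u * v ∈ 𝒜 (i + j))
    (hcommA : ∀ (i j : ℕ) (u v : A), u ∈ 𝒜 i → v ∈ 𝒜 j →
      u * v = ((-1 : ℚ) ^ (i * j)) • (v * u))
    (a b x : A) (ha : a ∈ 𝒜 2) (hb : b ∈ 𝒜 2) (hx : x ∈ 𝒜 3)
    (bas : Module.Basis (ℕ × ℕ × Bool) ℚ A)
    (hbas : ∀ (j i : ℕ) (e : Bool),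
      bas (j, i, e) = a ^ j * b ^ i * (if e then x else 1))
    (d : A →ₗ[ℚ] A)
    (hd2 : ∀ u, d (d u) = 0)
    (hddeg : ∀ (i : ℕ) (u : A), u ∈ 𝒜 i → d u ∈ 𝒜 (i + 1))
    (hleib : ∀ (i : ℕ) (u v : A), u ∈ 𝒜 i →
      d (u * v) = d u * v + ((-1 : ℚ) ^ i) • (u * d v))
    (hda : d a = 0) (hdb : d b = 0) (hdx : d x = a * a + b * b)
    -- φ with φ(a₀) = a
    (φ : B →ₐ[ℚ] A) (hφa : φ a₀ = a)
    -- the linear map r defined by the given values on the basis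
    (r : A →ₗ[ℚ] B)
    (hr1 : ∀ j i : ℕ, r (a ^ j * b ^ i * x) = 0)
    (hr2 : ∀ j i : ℕ, Odd i → r (a ^ j * b ^ i) = 0)
    (hr3 : ∀ j k : ℕ, r (a ^ j * b ^ (2 * k)) = ((-1 : ℚ) ^ k) • a₀ ^ (2 * k + j)) :
    -- r is a chain map (target differential is zero), Λ(a)-linear, and retracts φ:
    (∀ u : A, r (d u) = 0) ∧
    (∀ (v : B) (u : A), r (φ v * u) = v * r u) ∧
    (∀ v : B, r (φ v) = v) := by
  -- memberships
  have hmemA : ∀ j : ℕ, a ^ j ∈ 𝒜 (2 * j) := by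
    intro j
    induction j with
    | zero => simpa using honeA
    | succ n ih =>
      rw [pow_succ, show 2 * (n + 1) = 2 * n + 2 by ring]
      exact hgmulA _ _ _ _ ih ha
  have hmemB : ∀ i : ℕ, b ^ i ∈ 𝒜 (2 * i) := by
    intro i
    induction i with
    | zero => simpa using honeA
    | succ n ih =>
      rw [pow_succ, show 2 * (n + 1) = 2 * n + 2 by ring]
      exact hgmulA _ _ _ _ ih hb
  -- d vanishes on powers of a and b
  have hdpa : ∀ j : ℕ, d (a ^ j) = 0 := by
    intro j
    induction j with
    | zero =>
      have h := hleib 0 1 1 honeA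
      simp only [one_mul, mul_one, pow_zero, one_smul] at h
      nth_rewrite 1 [← add_zero (d 1)] at h
      have h0 := (add_left_cancel h).symm
      simpa using h0
    | succ n ih =>
      rw [pow_succ, hleib (2 * n) _ a (hmemA n), ih, hda, zero_mul, mul_zero,
        smul_zero, add_zero]
  have hdpb : ∀ i : ℕ, d (b ^ i) = 0 := by
    intro i
    induction i with
    | zero => simpa using hdpa 0
    | succ n ih =>
      rw [pow_succ, hleib (2 * n) _ b (hmemB n), ih, hdb, zero_mul, mul_zero,
        smul_zero, add_zero]
  have hdab : ∀ j i : ℕ, d (a ^ j * b ^ i) = 0 := by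
    intro j i
    rw [hleib (2 * j) _ _ (hmemA j), hdpa, hdpb, zero_mul, mul_zero, smul_zero,
      add_zero]
  -- commuting b-powers past a
  have hba : ∀ i : ℕ, b ^ i * a = a * b ^ i := by
    intro i
    have h := hcommA (2 * i) 2 (b ^ i) a (hmemB i) ha
    rw [h, Even.neg_one_pow ⟨2 * i, by ring⟩, one_smul]
  -- the key computation: r ∘ d kills the odd-degree basis elements
  have key : ∀ j i : ℕ, r (d (a ^ j * b ^ i * x)) = 0 := by
    intro j i
    have hmem := hgmulA (2 * j) (2 * i) _ _ (hmemA j) (hmemB i)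
    have hstep : d (a ^ j * b ^ i * x) = a ^ (j + 2) * b ^ i + a ^ j * b ^ (i + 2) := by
      rw [hleib (2 * j + 2 * i) _ x hmem, hdab, zero_mul, zero_add,
        Even.neg_one_pow ⟨j + i, by ring⟩, one_smul, hdx, mul_add]
      congr 1
      · calc a ^ j * b ^ i * (a * a) = a ^ j * ((b ^ i * a) * a) := by noncomm_ring
          _ = a ^ j * ((a * b ^ i) * a) := by rw [hba]
          _ = a ^ j * (a * (b ^ i * a)) := by noncomm_ring
          _ = a ^ j * (a * (a * b ^ i)) := by rw [hba]
          _ = a ^ (j + 2) * b ^ i := by noncomm_ring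
      · noncomm_ring
    rw [hstep, map_add]
    rcases Nat.even_or_odd i with ⟨k, hk⟩ | hodd
    · have hik : i = 2 * k := by omega
      subst hik
      rw [show 2 * k + 2 = 2 * (k + 1) by ring, hr3 (j + 2) k, hr3 j (k + 1),
        show 2 * (k + 1) + j = 2 * k + (j + 2) by ring, pow_succ]
      module
    · rw [hr2 (j + 2) i hodd, hr2 j (i + 2) (by rcases hodd with ⟨m, hm⟩; exact ⟨m + 1, by omega⟩)]
      simp
  -- claim 1: r ∘ d = 0
  have claim1 : ∀ u : A, r (d u) = 0 := by
    have h : r ∘ₗ d = (0 : A →ₗ[ℚ] B) := by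
      apply bas.ext
      rintro ⟨j, i, e⟩
      rw [hbas]
      simp only [LinearMap.comp_apply, LinearMap.zero_apply]
      cases e
      · rw [if_neg Bool.false_ne_true, mul_one, hdab, map_zero]
      · rw [if_pos rfl]
        exact key j i
    intro u
    exact congrFun (congrArg (fun f => f.toFun) h) u
  -- Λ(a)-linearity on powers of a
  have hrm : ∀ (m : ℕ) (u : A), r (a ^ m * u) = a₀ ^ m * r u := by
    intro m
    have h : r ∘ₗ LinearMap.mulLeft ℚ (a ^ m)
        = LinearMap.mulLeft ℚ (a₀ ^ m) ∘ₗ r := by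
      apply bas.ext
      rintro ⟨j, i, e⟩
      rw [hbas]
      simp only [LinearMap.comp_apply, LinearMap.mulLeft_apply]
      cases e
      · rw [if_neg Bool.false_ne_true, mul_one]
        have hmul : a ^ m * (a ^ j * b ^ i) = a ^ (m + j) * b ^ i := by
          rw [pow_add]; noncomm_ring
        rw [hmul]
        rcases Nat.even_or_odd i with ⟨k, hk⟩ | hodd
        · have hik : i = 2 * k := by omega
          subst hik
          rw [hr3 (m + j) k, hr3 j k, mul_smul_comm, ← pow_add,
            show 2 * k + (m + j) = m + (2 * k + j) by ring]
        · rw [hr2 (m + j) i hodd, hr2 j i hodd, mul_zero]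
      · rw [if_pos rfl]
        have hmul : a ^ m * (a ^ j * b ^ i * x) = a ^ (m + j) * b ^ i * x := by
          rw [pow_add]; noncomm_ring
        rw [hmul, hr1, hr1, mul_zero]
    intro u
    exact congrFun (congrArg (fun f => f.toFun) h) u
  have claim2 : ∀ (v : B) (u : A), r (φ v * u) = v * r u := by
    intro v u
    have h : r ∘ₗ LinearMap.mulRight ℚ u ∘ₗ φ.toLinearMap
        = LinearMap.mulRight ℚ (r u) := by
      apply basB.ext
      intro m
      simp only [LinearMap.comp_apply, LinearMap.mulRight_apply, AlgHom.toLinearMap_apply,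
        hbasB, map_pow, hφa]
      exact hrm m u
    exact congrFun (congrArg (fun f => f.toFun) h) v
  refine ⟨claim1, claim2, fun v => ?_⟩
  have hr1' : r (1 : A) = 1 := by
    have := hr3 0 0
    simpa using this
  have := claim2 v 1
  rw [mul_one, hr1', mul_one] at this
  exact this
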